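/- Let z ∈ ℂ \ {0} with |arg z| ≤ θ for some θ ∈ (π/2, π), additionally Re z ≤ 0 and |Im z| ≤ π. Then 1 - e^{-z} ∈ Σ_θ, i.e., |arg(1 - e^{-z})| < θ (in particular the ratio |Im(1-e^{-z})| / (-Re(1-e^{-z})) ≥ -tan θ whenever Re(1-e^{-z}) < 0). -/

import Mathlib

set_option maxHeartbeats 1000000

lemma key_ineq (t s u : ℝ) (ht : 0 < t) (hs0 : 0 < s) (hs : s < Real.pi / 2)
    (hut : u * t ≤ s) :
    Real.exp u * (t * Real.cos s - Real.sin s) < t := by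
  have hcos : 0 < Real.cos s := Real.cos_pos_of_mem_Ioo ⟨by linarith, hs⟩
  have hsin : 0 < Real.sin s := Real.sin_pos_of_pos_of_lt_pi hs0 (by linarith [Real.pi_pos])
  have heu : 0 < Real.exp u := Real.exp_pos u
  by_cases hD : t * Real.cos s - Real.sin s ≤ 0
  · nlinarith
  push_neg at hD
  have hD' : Real.sin s < t * Real.cos s := by linarith
  have htan : s < Real.tan s := Real.lt_tan hs0 hs
  have hsc : s * Real.cos s < Real.sin s := by
    rw [Real.tan_eq_sin_div_cos, lt_div_iff₀ hcos] at htan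
    exact htan
  have hc1 : Real.cos s ≤ 1 := Real.cos_le_one s
  have h1 : t * Real.cos s - Real.sin s < t - s := by
    nlinarith [mul_le_mul_of_nonneg_right hD'.le (sub_nonneg.2 hc1)]
  have h2 : t - t * u ≤ t * Real.exp (-u) := by
    have := Real.add_one_le_exp (-u)
    nlinarith
  have h3 : t * Real.cos s - Real.sin s < t * Real.exp (-u) := by linarith
  calc Real.exp u * (t * Real.cos s - Real.sin s)
      < Real.exp u * (t * Real.exp (-u)) := (mul_lt_mul_iff_right₀ heu).2 h3
    _ = t := by rw [Real.exp_neg]; field_simp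

theorem stmt_14 (θ : ℝ) (hθ : Real.pi / 2 < θ) (hθπ : θ < Real.pi)
    (z : ℂ) (hz : z ≠ 0) (harg : |Complex.arg z| ≤ θ)
    (hre : z.re ≤ 0) (him : |z.im| ≤ Real.pi) :
    1 - Complex.exp (-z) ≠ 0 ∧ |Complex.arg (1 - Complex.exp (-z))| < θ := by
  have hpi := Real.pi_pos
  have hθ0 : 0 < θ := by linarith
  have hsθ : 0 < Real.sin θ := Real.sin_pos_of_pos_of_lt_pi hθ0 hθπ
  have hcθ : Real.cos θ < 0 := Real.cos_neg_of_pi_div_two_lt_of_lt hθ (by linarith)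
  set c := -Real.cos θ with hc
  have hc0 : 0 < c := by rw [hc]; linarith
  have hpyth : Real.sin θ ^ 2 + c ^ 2 = 1 := by
    have := Real.sin_sq_add_cos_sq θ
    rw [hc]; ring_nf; ring_nf at this; linarith
  have habsz : 0 < ‖z‖ := norm_pos_iff.mpr hz
  have hcos_arg : Real.cos θ ≤ Real.cos (Complex.arg z) := by
    rw [← Real.cos_abs (Complex.arg z)]
    exact Real.cos_le_cos_of_nonneg_of_le_pi (abs_nonneg _) hθπ.le harg
  have hzre : Real.cos θ * ‖z‖ ≤ z.re := by
    rw [Complex.cos_arg hz] at hcos_arg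
    calc Real.cos θ * ‖z‖ ≤ (z.re / ‖z‖) * ‖z‖ :=
          mul_le_mul_of_nonneg_right hcos_arg habsz.le
      _ = z.re := by field_simp
  have hzsq : ‖z‖ ^ 2 = z.re ^ 2 + z.im ^ 2 := by
    rw [Complex.sq_norm, Complex.normSq_apply]; ring
  have hxx : (-z.re) ≤ c * ‖z‖ := by rw [hc]; linarith
  have hsq : z.re ^ 2 ≤ c ^ 2 * (z.re ^ 2 + z.im ^ 2) := by
    have h1 : (-z.re) ^ 2 ≤ (c * ‖z‖) ^ 2 :=
      pow_le_pow_left₀ (neg_nonneg.2 hre) hxx 2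
    rw [mul_pow, hzsq] at h1
    calc z.re ^ 2 = (-z.re) ^ 2 := by ring
      _ ≤ _ := h1
  have hsq2 : (Real.sin θ * (-z.re)) ^ 2 ≤ (c * |z.im|) ^ 2 := by
    rw [mul_pow, mul_pow, sq_abs]
    nlinarith [hsq, sq_nonneg z.re, sq_nonneg z.im]
  have hkey : Real.sin θ * (-z.re) ≤ c * |z.im| := by
    have h0 : 0 ≤ c * |z.im| := mul_nonneg hc0.le (abs_nonneg _)
    have h1 : 0 ≤ Real.sin θ * (-z.re) := mul_nonneg hsθ.le (neg_nonneg.2 hre)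
    have := Real.sqrt_le_sqrt hsq2
    rwa [Real.sqrt_sq h1, Real.sqrt_sq h0] at this
  set w := 1 - Complex.exp (-z) with hw
  have hwre : w.re = 1 - Real.exp (-z.re) * Real.cos z.im := by
    simp [hw, Complex.exp_re]
  have hwim : w.im = Real.exp (-z.re) * Real.sin z.im := by
    simp [hw, Complex.exp_im]
  have hwsq : ‖w‖ ^ 2 = w.re ^ 2 + w.im ^ 2 := by
    rw [Complex.sq_norm, Complex.normSq_apply]; ring
  have hmain : Real.cos θ * ‖w‖ < w.re := by
    rcases lt_or_ge 0 w.re with hpos | hneg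
    · have : Real.cos θ * ‖w‖ ≤ 0 :=
        mul_nonpos_of_nonpos_of_nonneg hcθ.le (norm_nonneg w)
      linarith
    · have hacy : 1 ≤ Real.exp (-z.re) * Real.cos z.im := by
        rw [hwre] at hneg; linarith
      have hex : 0 < Real.exp (-z.re) := Real.exp_pos _
      have hcy : 0 < Real.cos z.im := by nlinarith
      have hylt : |z.im| < Real.pi / 2 := by
        by_contra h
        push_neg at h
        have : Real.cos |z.im| ≤ 0 :=
          Real.cos_nonpos_of_pi_div_two_le_of_le h (by linarith)
        rw [Real.cos_abs] at this; linarith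
      have hy0 : z.im ≠ 0 := by
        intro h
        rw [h] at hkey
        simp only [abs_zero, mul_zero] at hkey
        have h1 : Real.sin θ * -z.re = 0 :=
          le_antisymm hkey (mul_nonneg hsθ.le (neg_nonneg.2 hre))
        have hx0 : z.re = 0 := by
          rcases mul_eq_zero.1 h1 with h' | h'
          · exact absurd h' hsθ.ne'
          · linarith
        exact hz (Complex.ext hx0 h)
      set s := |z.im| with hsdef
      have hs0 : 0 < s := abs_pos.2 hy0
      have hcs : Real.cos s = Real.cos z.im := Real.cos_abs z.im
      have hss : Real.sin s = |Real.sin z.im| := by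
        rcases abs_cases z.im with ⟨h1, h2⟩ | ⟨h1, h2⟩
        · rw [hsdef, h1, abs_of_nonneg]
          exact Real.sin_nonneg_of_nonneg_of_le_pi h2 (by rw [← h1]; exact him)
        · rw [hsdef, h1, Real.sin_neg, abs_of_nonpos]
          exact Real.sin_nonpos_of_nonpos_of_neg_pi_le h2.le (by linarith)
      have hut : (-z.re) * (Real.sin θ / c) ≤ s := by
        rw [mul_div_assoc', div_le_iff₀ hc0]
        calc (-z.re) * Real.sin θ = Real.sin θ * (-z.re) := by ring
          _ ≤ c * |z.im| := hkey
          _ = s * c := by rw [hsdef]; ring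
      have hkl := key_ineq (Real.sin θ / c) s (-z.re) (div_pos hsθ hc0) hs0 hylt hut
      have h5 : c * (Real.exp (-z.re) * (Real.sin θ / c * Real.cos s - Real.sin s))
          < c * (Real.sin θ / c) := mul_lt_mul_of_pos_left hkl hc0
      have h6 : c * (Real.sin θ / c) = Real.sin θ := by field_simp
      have h7 : c * (Real.exp (-z.re) * (Real.sin θ / c * Real.cos s - Real.sin s))
          = Real.sin θ * (Real.exp (-z.re) * Real.cos s)
            - c * (Real.exp (-z.re) * Real.sin s) := by
        field_simp
      rw [h6, h7] at h5
      set p := -(w.re) with hp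
      set q := Real.exp (-z.re) * Real.sin s with hq
      have hp0 : 0 ≤ p := by rw [hp]; linarith
      have hpval : Real.exp (-z.re) * Real.cos s - 1 = p := by
        rw [hp, hwre, hcs]; ring
      have hspq : Real.sin θ * p < c * q := by
        rw [← hpval]; rw [hq]; nlinarith [h5]
      have hq0 : 0 ≤ q := by
        apply mul_nonneg hex.le
        rw [hss]; exact abs_nonneg _
      have hqim : q = |w.im| := by
        rw [hq, hwim, hss, abs_mul, abs_of_nonneg hex.le]
      have hwabs2 : ‖w‖ ^ 2 = p ^ 2 + q ^ 2 := by
        rw [hwsq, hqim, hp, sq_abs]; ring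
      have hq2 : (Real.sin θ * p) ^ 2 < (c * q) ^ 2 :=
        pow_lt_pow_left₀ hspq (mul_nonneg hsθ.le hp0) two_ne_zero
      have hq2' : Real.sin θ ^ 2 * p ^ 2 < c ^ 2 * q ^ 2 := by
        calc Real.sin θ ^ 2 * p ^ 2 = (Real.sin θ * p) ^ 2 := by ring
          _ < (c * q) ^ 2 := hq2
          _ = c ^ 2 * q ^ 2 := by ring
      have hp2 : p ^ 2 < (c * ‖w‖) ^ 2 := by
        have e1 : (c * ‖w‖) ^ 2 = c ^ 2 * p ^ 2 + c ^ 2 * q ^ 2 := by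
          rw [mul_pow, hwabs2]; ring
        have e2 : Real.sin θ ^ 2 * p ^ 2 + c ^ 2 * p ^ 2 = p ^ 2 := by
          linear_combination p ^ 2 * hpyth
        linarith
      have hfin : p < c * ‖w‖ :=
        lt_of_pow_lt_pow_left₀ 2 (mul_nonneg hc0.le (norm_nonneg w)) hp2
      rw [hc] at hfin
      rw [hp] at hfin
      linarith
  have hwne : w ≠ 0 := by
    intro h
    rw [h] at hmain
    simp at hmain
  refine ⟨hwne, ?_⟩
  by_contra h
  push_neg at h
  have h1 : Real.cos (Complex.arg w) ≤ Real.cos θ := by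
    rw [← Real.cos_abs (Complex.arg w)]
    exact Real.cos_le_cos_of_nonneg_of_le_pi hθ0.le (Complex.abs_arg_le_pi w) h
  rw [Complex.cos_arg hwne] at h1
  have habsw : 0 < ‖w‖ := norm_pos_iff.mpr hwne
  have h2 := mul_le_mul_of_nonneg_right h1 habsw.le
  have h3 : w.re / ‖w‖ * ‖w‖ = w.re :=
    div_mul_cancel₀ w.re habsw.ne'
  rw [h3] at h2
  linarith
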